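/- Let J be a set, let Sym(J) be the group of bijections of J equipped with the topology of pointwise convergence (the subspace topology from the product J^J with J discrete), and let Sym_ω(J) be the subgroup of permutations σ whose support {x ∈ J : σ(x) ≠ x} is countable. For each countable D ⊆ J put G_D = {σ ∈ Sym(J) : supp(σ) ⊆ D} with the subspace topology. Then the colimit space topology on Sym_ω(J) = ⋃_{D ∈ [J]^{≤ω}} G_D (the finest topology making each inclusion G_D → Sym_ω(J) continuous) coincides with the topology of pointwise convergence; in particular it is a group topology. -/

import Mathlib

open TopologicalSpace

variable (J : Type*)

/-- The topology of pointwise convergence on `Sym(J) = Equiv.Perm J`: the subspace topology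
from the product `J^J` where `J` carries the discrete topology. -/
instance instPermPointwiseTopology : TopologicalSpace (Equiv.Perm J) :=
  TopologicalSpace.induced (fun σ => (σ : J → J))
    (@Pi.topologicalSpace J (fun _ => J) (fun _ => ⊥))

/-- The subgroup `Sym_ω(J)` of permutations with countable support. -/
def symOmega : Subgroup (Equiv.Perm J) where
  carrier := {σ | {x | σ x ≠ x}.Countable}
  one_mem' := by
    show ({x | (1 : Equiv.Perm J) x ≠ x}).Countable
    have : {x | (1 : Equiv.Perm J) x ≠ x} = ∅ := by ext x; simp
    rw [this]
    exact Set.countable_empty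
  mul_mem' := by
    intro a b ha hb
    refine Set.Countable.mono ?_ (ha.union hb)
    intro x hx
    by_contra hc
    simp only [Set.mem_union, Set.mem_setOf_eq, not_or, not_not] at hc
    exact hx (by simp [Equiv.Perm.mul_apply, hc.1, hc.2])
  inv_mem' := by
    intro a ha
    refine Set.Countable.mono ?_ ha
    intro x hx
    simp only [Set.mem_setOf_eq] at hx ⊢
    intro h
    exact hx (((congrArg (⇑a⁻¹) h).symm.trans (by simp)))
  
/-- For a countable `D ⊆ J`, the set of permutations with support contained in `D`. -/
def permPiece (D : Set J) : Set (Equiv.Perm J) := {σ | ∀ x ∉ D, σ x = x}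

theorem permPiece_subset (D : Set J) (hD : D.Countable) :
    permPiece J D ⊆ (symOmega J : Set (Equiv.Perm J)) := fun σ hσ =>
  Set.Countable.mono (fun x hx => by by_contra hc; exact hx (hσ x hc)) hD

/-- Key combinatorial lemma: a set open in every piece contains a basic pointwise
neighbourhood of each of its points. -/
theorem key (U : Set ((symOmega J : Set (Equiv.Perm J))))
    (h : ∀ (D : Set J) (hD : D.Countable),
      IsOpen ((Set.inclusion (permPiece_subset J D hD)) ⁻¹' U))
    (σ0 : (symOmega J : Set (Equiv.Perm J))) (hσ0 : σ0 ∈ U) :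
    ∃ F : Finset J, ∀ τ : (symOmega J : Set (Equiv.Perm J)),
      (∀ x ∈ F, (τ : Equiv.Perm J) x = (σ0 : Equiv.Perm J) x) → τ ∈ U := by
  classical
  by_contra hcon
  push_neg at hcon
  choose t ht1 ht2 using hcon
  -- support function
  set supp : ↥(symOmega J : Set (Equiv.Perm J)) → Set J :=
    fun τ => {x | τ.1 x ≠ x} with hsuppdef
  have hsuppc : ∀ τ, (supp τ).Countable := fun τ => τ.2
  -- one closure step
  set step : Set J → Set J :=
    fun E => E ∪ ⋃ F ∈ {F : Finset J | ↑F ⊆ E}, supp (t F) with hstepdef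
  have hstepc : ∀ E : Set J, E.Countable → (step E).Countable := by
    intro E hE
    refine hE.union (Set.Countable.biUnion ?_ fun F _ => hsuppc _)
    have : {F : Finset J | ↑F ⊆ E} ⊆ (fun F : Finset J => (↑F : Set J)) ⁻¹'
        {s | s.Finite ∧ s ⊆ E} := fun F hF => ⟨F.finite_toSet, hF⟩
    exact ((Set.countable_setOf_finite_subset hE).preimage
      Finset.coe_injective).mono this
  -- the tower
  let D : ℕ → Set J := fun n => Nat.rec (supp σ0) (fun _ E => step E) n
  have hD0 : D 0 = supp σ0 := rfl
  have hDs : ∀ n, D (n + 1) = step (D n) := fun n => rfl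
  have hmono : Monotone D := monotone_nat_of_le_succ fun n => by
    rw [hDs]; exact Set.subset_union_left
  have hDc : ∀ n, (D n).Countable := by
    intro n; induction n with
    | zero => exact hsuppc σ0
    | succ n ih => rw [hDs]; exact hstepc _ ih
  set Dω : Set J := ⋃ n, D n with hDω
  have hDωc : Dω.Countable := Set.countable_iUnion hDc
  have hsub : ∀ n, D n ⊆ Dω := fun n => Set.subset_iUnion D n
  have hclosed : ∀ F : Finset J, ↑F ⊆ Dω → supp (t F) ⊆ Dω := by
    intro F hF
    obtain ⟨I, hIfin, hFI⟩ := Set.finite_subset_iUnion F.finite_toSet hF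
    obtain ⟨n, hn⟩ := hIfin.bddAbove
    have hFn : (↑F : Set J) ⊆ D n := by
      refine hFI.trans ?_
      exact Set.iUnion₂_subset fun i hi => hmono (hn hi)
    have : supp (t F) ⊆ step (D n) :=
      (Set.subset_biUnion_of_mem (u := fun F => supp (t F)) hFn).trans
        Set.subset_union_right
    exact this.trans ((hDs n ▸ hsub (n + 1)))
  have hσ0supp : supp σ0 ⊆ Dω := hD0 ▸ hsub 0
  have hmemPiece : ∀ τ : ↥(symOmega J : Set (Equiv.Perm J)), supp τ ⊆ Dω →
      (τ : Equiv.Perm J) ∈ permPiece J Dω := by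
    intro τ hτ x hx
    by_contra hc
    exact hx (hτ hc)
  have hσ0mem : (σ0 : Equiv.Perm J) ∈ permPiece J Dω := hmemPiece σ0 hσ0supp
  -- use openness on the piece Dω
  letI : TopologicalSpace J := ⊥
  haveI : DiscreteTopology J := ⟨rfl⟩
  have hopen := h Dω hDωc
  obtain ⟨W, hW, hWeq⟩ := isOpen_induced_iff.mp hopen
  obtain ⟨W', hW', hW'eq⟩ :=
    (@isOpen_induced_iff (Equiv.Perm J) (J → J) _ W (fun σ => ⇑σ)).mp hW
  have hσ0W' : ((σ0 : Equiv.Perm J) : J → J) ∈ W' := by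
    have : (⟨(σ0 : Equiv.Perm J), hσ0mem⟩ : permPiece J Dω) ∈
        (Set.inclusion (permPiece_subset J Dω hDωc)) ⁻¹' U := by
      show Set.inclusion _ _ ∈ U
      have : Set.inclusion (permPiece_subset J Dω hDωc)
          ⟨(σ0 : Equiv.Perm J), hσ0mem⟩ = σ0 := Subtype.ext rfl
      rw [this]; exact hσ0
    rw [← hWeq] at this
    have h2 : (σ0 : Equiv.Perm J) ∈ W := this
    rw [← hW'eq] at h2
    exact h2
  obtain ⟨I, u, hu, hpi⟩ := isOpen_pi_iff.mp hW' _ hσ0W'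
  -- every permutation in the piece agreeing with σ0 on I is in U
  have hIU : ∀ π : Equiv.Perm J, (hπ : π ∈ permPiece J Dω) →
      (∀ x ∈ I, π x = (σ0 : Equiv.Perm J) x) →
      (⟨π, permPiece_subset J Dω hDωc hπ⟩ : ↥(symOmega J : Set (Equiv.Perm J))) ∈ U := by
    intro π hπ hagree
    have hπW' : ⇑π ∈ W' := by
      apply hpi
      intro x hx
      have := (hu x hx).2
      rw [show (π : J → J) x = (σ0 : Equiv.Perm J) x from hagree x hx]
      exact this
    have hπW : π ∈ W := by rw [← hW'eq]; exact hπW'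
    have : (⟨π, hπ⟩ : permPiece J Dω) ∈
        (Set.inclusion (permPiece_subset J Dω hDωc)) ⁻¹' U := by
      rw [← hWeq]; exact hπW
    exact this
  -- derive the contradiction
  set F₀ : Finset J := I.filter (· ∈ Dω) with hF₀
  have hF₀sub : (↑F₀ : Set J) ⊆ Dω := by
    intro x hx
    simp only [hF₀, Finset.coe_filter, Set.mem_setOf_eq] at hx
    exact hx.2
  have hsuppt : supp (t F₀) ⊆ Dω := hclosed F₀ hF₀sub
  have htmem : ((t F₀ : ↥(symOmega J : Set (Equiv.Perm J))) : Equiv.Perm J) ∈ permPiece J Dω :=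
    hmemPiece _ hsuppt
  have hagree : ∀ x ∈ I, ((t F₀ : ↥(symOmega J : Set (Equiv.Perm J))) : Equiv.Perm J) x
      = (σ0 : Equiv.Perm J) x := by
    intro x hx
    by_cases hxD : x ∈ Dω
    · exact ht1 F₀ x (by simp [hF₀, hx, hxD])
    · have h1 : ((t F₀ : ↥(symOmega J : Set (Equiv.Perm J))) : Equiv.Perm J) x = x := by
        by_contra hc
        exact hxD (hsuppt hc)
      have h2 : (σ0 : Equiv.Perm J) x = x := by
        by_contra hc
        exact hxD (hσ0supp hc)
      rw [h1, h2]
  have := hIU _ htmem hagree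
  have heq : (⟨((t F₀ : ↥(symOmega J : Set (Equiv.Perm J))) : Equiv.Perm J),
      permPiece_subset J Dω hDωc htmem⟩ : ↥(symOmega J : Set (Equiv.Perm J))) = t F₀ :=
    Subtype.ext rfl
  rw [heq] at this
  exact ht2 F₀ this

theorem permTopGroup : @IsTopologicalGroup (Equiv.Perm J) (instPermPointwiseTopology J) _ := by
  letI : TopologicalSpace J := ⊥
  haveI : DiscreteTopology J := ⟨rfl⟩
  have hcoe : Continuous fun π : Equiv.Perm J => ⇑π := continuous_induced_dom
  have heval : ∀ x : J, Continuous fun π : Equiv.Perm J => π x :=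
    fun x => (continuous_apply x).comp hcoe
  refine { continuous_mul := ?_, continuous_inv := ?_ }
  · apply continuous_induced_rng.2
    apply continuous_pi; intro x
    rw [continuous_discrete_rng]
    intro y
    show IsOpen ((fun p : Equiv.Perm J × Equiv.Perm J =>
      ((p.1 * p.2 : Equiv.Perm J) : J → J) x) ⁻¹' {y})
    have : (fun p : Equiv.Perm J × Equiv.Perm J => ((p.1 * p.2 : Equiv.Perm J) : J → J) x) ⁻¹' {y}
        = ⋃ z : J, ({π : Equiv.Perm J | π z = y} ×ˢ {π : Equiv.Perm J | π x = z}) := by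
      ext p
      simp only [Set.mem_preimage, Set.mem_singleton_iff, Set.mem_iUnion, Set.mem_prod,
        Set.mem_setOf_eq, Equiv.Perm.mul_apply]
      exact ⟨fun h => ⟨p.2 x, h, rfl⟩, fun ⟨z, h1, h2⟩ => by rw [h2]; exact h1⟩
    rw [this]
    exact isOpen_iUnion fun z =>
      ((heval z).isOpen_preimage {y} (isOpen_discrete _)).prod
        ((heval x).isOpen_preimage {z} (isOpen_discrete _))
  · apply continuous_induced_rng.2
    apply continuous_pi; intro x
    rw [continuous_discrete_rng]
    intro y
    show IsOpen ((fun π : Equiv.Perm J => ((π⁻¹ : Equiv.Perm J) : J → J) x) ⁻¹' {y})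
    have : (fun π : Equiv.Perm J => ((π⁻¹ : Equiv.Perm J) : J → J) x) ⁻¹' {y}
        = (fun π : Equiv.Perm J => π y) ⁻¹' {x} := by
      ext π
      simp only [Set.mem_preimage, Set.mem_singleton_iff]
      constructor
      · rintro rfl; exact Equiv.apply_symm_apply π x
      · rintro rfl; exact Equiv.symm_apply_apply π y
    rw [this]
    exact (heval y).isOpen_preimage {x} (isOpen_discrete _)


/-- `Sym_ω(J)` is the union of the groups `G_D` of permutations supported in a
countable set `D`, and the colimit space topology on it (the finest topology making each
inclusion `G_D → Sym_ω(J)` continuous, i.e. the supremum of the coinduced topologies, where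
each `G_D` carries the subspace topology) coincides with the topology of pointwise
convergence; in particular it is a group topology. -/
theorem colimit_symOmega :
    (⋃ (D : Set J) (_ : D.Countable), permPiece J D) = (symOmega J : Set (Equiv.Perm J)) ∧
      (⨆ (D : Set J) (hD : D.Countable),
          TopologicalSpace.coinduced (Set.inclusion (permPiece_subset J D hD))
            (inferInstance : TopologicalSpace (permPiece J D)))
        = (inferInstance : TopologicalSpace (symOmega J)) ∧
      @IsTopologicalGroup (symOmega J)
        (⨆ (D : Set J) (hD : D.Countable),
          TopologicalSpace.coinduced (Set.inclusion (permPiece_subset J D hD))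
            (inferInstance : TopologicalSpace (permPiece J D))) _ := by
  classical
  have hunion : (⋃ (D : Set J) (_ : D.Countable), permPiece J D)
      = (symOmega J : Set (Equiv.Perm J)) := by
    apply Set.Subset.antisymm
    · exact Set.iUnion₂_subset fun D hD => permPiece_subset J D hD
    · intro σ hσ
      refine Set.mem_iUnion₂.mpr ⟨{x | σ x ≠ x}, hσ, ?_⟩
      intro x hx
      by_contra hc
      exact hx hc
  have heq : (⨆ (D : Set J) (hD : D.Countable),
      TopologicalSpace.coinduced (Set.inclusion (permPiece_subset J D hD))
        (inferInstance : TopologicalSpace (permPiece J D)))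
      = (inferInstance : TopologicalSpace (symOmega J)) := by
    apply le_antisymm
    · refine iSup_le fun D => iSup_le fun hD => ?_
      exact continuous_iff_coinduced_le.mp (continuous_inclusion (permPiece_subset J D hD))
    · rw [TopologicalSpace.le_def]
      intro U hU
      simp only [isOpen_iSup_iff, isOpen_coinduced] at hU
      show IsOpen U
      rw [isOpen_iff_forall_mem_open]
      intro σ0 hσ0
      obtain ⟨F, hF⟩ := key J U hU σ0 hσ0
      refine ⟨{τ : ↥(symOmega J : Set (Equiv.Perm J)) | ∀ x ∈ F, τ.1 x = σ0.1 x},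
        fun τ hτ => hF τ hτ, ?_, fun x hx => σ0.1.apply_eq_iff_eq.mpr rfl ▸ rfl⟩
      · letI : TopologicalSpace J := ⊥
        haveI : DiscreteTopology J := ⟨rfl⟩
        have hpi : IsOpen (Set.pi (↑F : Set J) fun x => ({σ0.1 x} : Set J)) :=
          isOpen_set_pi F.finite_toSet fun a _ => isOpen_discrete _
        have h1 : IsOpen ((fun π : Equiv.Perm J => ⇑π) ⁻¹'
            Set.pi (↑F : Set J) fun x => ({σ0.1 x} : Set J)) :=
          hpi.preimage continuous_induced_dom
        have h2 : IsOpen (Subtype.val ⁻¹' ((fun π : Equiv.Perm J => ⇑π) ⁻¹'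
            Set.pi (↑F : Set J) fun x => ({σ0.1 x} : Set J)) :
            Set ↥(symOmega J : Set (Equiv.Perm J))) :=
          h1.preimage continuous_subtype_val
        exact h2
  refine ⟨hunion, heq, ?_⟩
  rw [heq]
  haveI : IsTopologicalGroup (Equiv.Perm J) := permTopGroup J
  exact inferInstance
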